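/- Let (Ω, 𝓕, P) be a probability space, and let {V_c}_{c∈ℕ} and {R_c}_{c∈ℕ} be sequences of ℕ-valued random variables on Ω with V_c ≤ R_c and R_c ≥ 1 almost surely for every c. Fix β ∈ (0,1). If R_c converges to ∞ in probability (i.e., for every M ∈ ℝ, Pr[R_c > M] → 1 as c → ∞), then |V_c/R_c − CPL(R_c, V_c, β)| converges to 0 in probability. -/

import Mathlib

open MeasureTheory Filter

/-- Upper tail probability `Pr[X ≥ v]` for `X ~ Binomial(r, p)`. -/
noncomputable def binomTail (r v : ℕ) (p : ℝ) : ℝ :=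
  ∑ k ∈ Finset.Icc v r, (r.choose k : ℝ) * p ^ k * (1 - p) ^ (r - k)

/-- The Clopper–Pearson lower bound
`CPL(r, v, β) := sSup { p ∈ [0,1] : Pr_{X ~ Binomial(r,p)}[X ≥ v] ≤ β }`. -/
noncomputable def CPL (r v : ℕ) (β : ℝ) : ℝ :=
  sSup {p : ℝ | p ∈ Set.Icc (0 : ℝ) 1 ∧ binomTail r v p ≤ β}

/-! ### Auxiliary lemmas -/

lemma binom_var (r : ℕ) (p : ℝ) :
    ∑ k ∈ Finset.range (r+1), ((r:ℝ)*p - k)^2 * ((r.choose k:ℝ) * p^k * (1-p)^(r-k))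
      = r * p * (1-p) := by
  have h := congrArg (Polynomial.eval p) (bernsteinPolynomial.variance ℝ r)
  simp only [Polynomial.eval_finset_sum, Polynomial.eval_mul, Polynomial.eval_pow,
    Polynomial.eval_sub, Polynomial.eval_smul, Polynomial.eval_X, Polynomial.eval_natCast,
    Polynomial.eval_one, bernsteinPolynomial, smul_eq_mul, nsmul_eq_mul] at h
  convert h using 2

lemma binom_sum_one (r : ℕ) (p : ℝ) :
    ∑ k ∈ Finset.range (r+1), (r.choose k:ℝ) * p^k * (1-p)^(r-k) = 1 := by
  calc ∑ k ∈ Finset.range (r+1), (r.choose k:ℝ) * p^k * (1-p)^(r-k)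
      = ∑ k ∈ Finset.range (r+1), p^k * (1-p)^(r-k) * (r.choose k:ℝ) :=
        Finset.sum_congr rfl (fun k _ => by ring)
    _ = (p + (1-p))^r := (add_pow p (1-p) r).symm
    _ = 1 := by norm_num

lemma binom_term_nonneg (r k : ℕ) {p : ℝ} (hp0 : 0 ≤ p) (hp1 : p ≤ 1) :
    0 ≤ (r.choose k:ℝ) * p^k * (1-p)^(r-k) := by
  have h1 : (0:ℝ) ≤ 1 - p := by linarith
  positivity

/-- Chebyshev-type bound for binomial sums. -/
lemma cheb (r : ℕ) (p t : ℝ) (hp0 : 0 ≤ p) (hp1 : p ≤ 1) (ht : 0 < t)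
    (S : Finset ℕ) (hS : S ⊆ Finset.range (r+1))
    (hfar : ∀ k ∈ S, t ≤ |(r:ℝ)*p - k|) :
    ∑ k ∈ S, (r.choose k:ℝ) * p^k * (1-p)^(r-k) ≤ (r*p*(1-p))/t^2 := by
  have hterm := fun k => binom_term_nonneg r k hp0 hp1
  calc ∑ k ∈ S, (r.choose k:ℝ) * p^k * (1-p)^(r-k)
      ≤ ∑ k ∈ S, (((r:ℝ)*p - k)^2/t^2) * ((r.choose k:ℝ) * p^k * (1-p)^(r-k)) := by
        refine Finset.sum_le_sum (fun k hk => ?_)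
        have h1 : t^2 ≤ ((r:ℝ)*p - k)^2 := by
          have := hfar k hk
          calc t^2 ≤ |(r:ℝ)*p - k|^2 := by
                exact pow_le_pow_left₀ ht.le this 2
            _ = ((r:ℝ)*p - k)^2 := sq_abs _
        have h2 : (1:ℝ) ≤ ((r:ℝ)*p - k)^2/t^2 := by
          rw [le_div_iff₀ (by positivity)]; linarith
        nlinarith [hterm k]
    _ ≤ ∑ k ∈ Finset.range (r+1), (((r:ℝ)*p - k)^2/t^2) * ((r.choose k:ℝ) * p^k * (1-p)^(r-k)) := by
        refine Finset.sum_le_sum_of_subset_of_nonneg hS (fun k _ _ => ?_)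
        have := hterm k; positivity
    _ = (∑ k ∈ Finset.range (r+1), ((r:ℝ)*p - k)^2 * ((r.choose k:ℝ) * p^k * (1-p)^(r-k)))/t^2 := by
        rw [Finset.sum_div]
        exact Finset.sum_congr rfl (fun k _ => by ring)
    _ = (r*p*(1-p))/t^2 := by rw [binom_var]

lemma CPL_bddAbove (r v : ℕ) (β : ℝ) :
    BddAbove {p : ℝ | p ∈ Set.Icc (0 : ℝ) 1 ∧ binomTail r v p ≤ β} :=
  ⟨1, fun _ hx => hx.1.2⟩

lemma CPL_nonneg (r v : ℕ) (β : ℝ) : 0 ≤ CPL r v β := by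
  rcases Set.eq_empty_or_nonempty {p : ℝ | p ∈ Set.Icc (0 : ℝ) 1 ∧ binomTail r v p ≤ β} with h | h
  · rw [CPL, h, Real.sSup_empty]
  · obtain ⟨x, hx⟩ := h
    exact le_trans hx.1.1 (le_csSup (CPL_bddAbove r v β) hx)

lemma CPL_lower (r v : ℕ) (hr : 1 ≤ r) (hv : v ≤ r) {β : ℝ} (hβ : 0 < β) :
    (v:ℝ)/r - 1/(2*Real.sqrt (β*r)) ≤ CPL r v β := by
  have hr0 : (0:ℝ) < r := by exact_mod_cast hr
  have hβr : (0:ℝ) < β * r := by positivity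
  set s := Real.sqrt (β*r) with hs
  have hs0 : 0 < s := Real.sqrt_pos.2 hβr
  have hs2 : s^2 = β*r := Real.sq_sqrt hβr.le
  set δ := 1/(2*s) with hδdef
  have hδ0 : 0 < δ := by positivity
  by_cases h : (v:ℝ)/r - δ ≤ 0
  · exact le_trans h (CPL_nonneg r v β)
  push_neg at h
  set p₀ := (v:ℝ)/r - δ with hp₀
  have hp₀1 : p₀ ≤ 1 := by
    have : (v:ℝ)/r ≤ 1 := by
      rw [div_le_one hr0]; exact_mod_cast hv
    simp only [hp₀]; linarith
  have hrδ : 0 < (r:ℝ)*δ := by positivity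
  have hrp₀ : (r:ℝ) * p₀ = v - r*δ := by
    have e : (r:ℝ) * ((v:ℝ)/r) = v := by field_simp
    rw [hp₀, mul_sub, e]
  have htail : binomTail r v p₀ ≤ β := by
    have hc := cheb r p₀ (r*δ) h.le hp₀1 (by positivity) (Finset.Icc v r)
      (fun k hk => by
        simp only [Finset.mem_Icc] at hk ⊢
        rw [Finset.mem_range]; omega)
      (fun k hk => by
        simp only [Finset.mem_Icc] at hk
        have hkv : (v:ℝ) ≤ k := by exact_mod_cast hk.1
        rw [abs_sub_comm, abs_of_nonneg (by rw [hrp₀]; linarith [hrδ])]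
        rw [hrp₀]; linarith [hrδ])
    refine le_trans hc ?_
    rw [div_le_iff₀ (by positivity)]
    have h1 : β * ((r:ℝ)*δ)^2 = r/4 := by
      have : ((r:ℝ)*δ)^2 = r^2/(4*(β*r)) := by
        rw [← hs2, hδdef]; field_simp; ring
      rw [this]; field_simp
    rw [h1]
    nlinarith [sq_nonneg (p₀ - 1/2)]
  exact le_csSup (CPL_bddAbove r v β) ⟨⟨h.le, hp₀1⟩, htail⟩

lemma CPL_upper (r v : ℕ) (hr : 1 ≤ r) (hv : v ≤ r) {β : ℝ} (hβ0 : 0 < β) (hβ1 : β < 1) :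
    CPL r v β ≤ (v:ℝ)/r + 1/Real.sqrt (2*(1-β)*r) := by
  have hr0 : (0:ℝ) < r := by exact_mod_cast hr
  have h1β : (0:ℝ) < 1 - β := by linarith
  have harg : (0:ℝ) < 2*(1-β)*r := by positivity
  set s := Real.sqrt (2*(1-β)*r) with hs
  have hs0 : 0 < s := Real.sqrt_pos.2 harg
  have hs2 : s^2 = 2*(1-β)*r := Real.sq_sqrt harg.le
  set δ := 1/s with hδdef
  have hδ0 : 0 < δ := by positivity
  refine Real.sSup_le ?_ (by positivity)
  rintro p ⟨⟨hp0, hp1⟩, htail⟩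
  by_contra hlt
  push_neg at hlt
  have hrδ : 0 < (r:ℝ)*δ := by positivity
  have hrp : (v:ℝ) + r*δ < r * p := by
    have e : (r:ℝ) * ((v:ℝ)/r) = v := by field_simp
    have h' := mul_lt_mul_of_pos_left hlt hr0
    rw [mul_add, e] at h'
    exact h' 
  have hlow : ∑ k ∈ Finset.range v, (r.choose k:ℝ) * p^k * (1-p)^(r-k) ≤ (1-β)/2 := by
    have hc := cheb r p (r*δ) hp0 hp1 (by positivity) (Finset.range v)
      (fun k hk => by rw [Finset.mem_range] at hk ⊢; omega)
      (fun k hk => by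
        rw [Finset.mem_range] at hk
        have hkv : (k:ℝ) ≤ v := by exact_mod_cast hk.le
        rw [abs_of_nonneg (by linarith [hrδ])]; linarith [hrδ])
    refine le_trans hc ?_
    rw [div_le_iff₀ (by positivity)]
    have h1 : (1-β)/2 * ((r:ℝ)*δ)^2 = r/4 := by
      have : ((r:ℝ)*δ)^2 = r^2/(2*(1-β)*r) := by
        rw [← hs2, hδdef]; field_simp
      rw [this]; field_simp; ring
    rw [h1]
    nlinarith [sq_nonneg (p - 1/2)]
  have hsplit : (∑ k ∈ Finset.range v, (r.choose k:ℝ) * p^k * (1-p)^(r-k)) + binomTail r v p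
      = 1 := by
    have hdecomp : (∑ k ∈ Finset.range v, (r.choose k:ℝ) * p^k * (1-p)^(r-k)) + binomTail r v p
        = ∑ k ∈ Finset.range (r+1), (r.choose k:ℝ) * p^k * (1-p)^(r-k) := by
      rw [binomTail, show Finset.Icc v r = Finset.Ico v (r+1) from (Finset.Ico_add_one_right_eq_Icc v r).symm,
        Finset.range_eq_Ico, Finset.range_eq_Ico]
      exact Finset.sum_Ico_consecutive _ (Nat.zero_le v) (by omega)
    rw [hdecomp, binom_sum_one]
  linarith

noncomputable def Cst (β : ℝ) : ℝ := max (1/(2*Real.sqrt β)) (1/Real.sqrt (2*(1-β)))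

lemma Cst_pos {β : ℝ} (hβ : β ∈ Set.Ioo (0:ℝ) 1) : 0 < Cst β := by
  have : (0:ℝ) < 1/(2*Real.sqrt β) := by
    have := Real.sqrt_pos.2 hβ.1
    positivity
  exact lt_of_lt_of_le this (le_max_left _ _)

lemma key_bound (r v : ℕ) (hr : 1 ≤ r) (hv : v ≤ r) {β : ℝ} (hβ : β ∈ Set.Ioo (0:ℝ) 1) :
    |(v:ℝ)/r - CPL r v β| ≤ Cst β / Real.sqrt r := by
  obtain ⟨hβ0, hβ1⟩ := hβ
  have hr0 : (0:ℝ) < r := by exact_mod_cast hr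
  have hsr : 0 < Real.sqrt r := Real.sqrt_pos.2 hr0
  have e1 : 1/(2*Real.sqrt (β*r)) = (1/(2*Real.sqrt β))/Real.sqrt r := by
    rw [Real.sqrt_mul hβ0.le]; field_simp
  have e2 : 1/Real.sqrt (2*(1-β)*r) = (1/Real.sqrt (2*(1-β)))/Real.sqrt r := by
    rw [Real.sqrt_mul (by linarith : (0:ℝ) ≤ 2*(1-β))]; field_simp
  rw [abs_sub_le_iff]
  constructor
  · have h := CPL_lower r v hr hv hβ0
    have : (1/(2*Real.sqrt (β*r))) ≤ Cst β / Real.sqrt r := by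
      rw [e1]
      gcongr
      exact le_max_left _ _
    linarith
  · have h := CPL_upper r v hr hv hβ0 hβ1
    have : (1/Real.sqrt (2*(1-β)*r)) ≤ Cst β / Real.sqrt r := by
      rw [e2]
      gcongr
      exact le_max_right _ _
    linarith

theorem stmt1 {Ω : Type*} [MeasurableSpace Ω] (P : Measure Ω) [IsProbabilityMeasure P]
    (V R : ℕ → Ω → ℕ) (hVmeas : ∀ c, Measurable (V c)) (hRmeas : ∀ c, Measurable (R c))
    (hVR : ∀ c, ∀ᵐ ω ∂P, V c ω ≤ R c ω) (hR1 : ∀ c, ∀ᵐ ω ∂P, 1 ≤ R c ω)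
    (β : ℝ) (hβ : β ∈ Set.Ioo (0 : ℝ) 1)
    (hRinf : ∀ M : ℝ,
      Tendsto (fun c => (P {ω | M < (R c ω : ℝ)}).toReal) atTop (nhds 1)) :
    ∀ ε > 0, Tendsto
      (fun c => (P {ω | ε < |(V c ω : ℝ) / (R c ω : ℝ) - CPL (R c ω) (V c ω) β|}).toReal)
      atTop (nhds 0) := by
  intro ε hε
  set C := Cst β with hC
  have hC0 : 0 < C := Cst_pos hβ
  set M := (C/ε)^2 with hM
  have hmeas : ∀ c, MeasurableSet {ω | M < (R c ω : ℝ)} := by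
    intro c
    have hm : Measurable fun ω => ((R c ω : ℕ) : ℝ) :=
      Measurable.comp (measurable_from_top) (hRmeas c)
    exact measurableSet_lt measurable_const hm
  have hsub : ∀ c, {ω | ε < |(V c ω : ℝ) / (R c ω : ℝ) - CPL (R c ω) (V c ω) β|}
      ≤ᵐ[P] {ω | M < (R c ω : ℝ)}ᶜ := by
    intro c
    filter_upwards [hVR c, hR1 c] with ω hvr hr1
    intro hev
    have hev' : ε < |(V c ω : ℝ) / (R c ω : ℝ) - CPL (R c ω) (V c ω) β| := hev
    intro hMlt'
    have hMlt : M < ((R c ω : ℕ) : ℝ) := hMlt' 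
    have hkey := key_bound (R c ω) (V c ω) hr1 hvr hβ
    have hrpos : (0:ℝ) < R c ω := by exact_mod_cast hr1
    have hsr : 0 < Real.sqrt (R c ω) := Real.sqrt_pos.2 hrpos
    have hsq : C/ε < Real.sqrt (R c ω) := by
      rw [show (C/ε : ℝ) = Real.sqrt M from (Real.sqrt_sq (by positivity)).symm]
      exact Real.sqrt_lt_sqrt (by positivity) hMlt
    have h2 : C / Real.sqrt (R c ω) < ε := by
      rw [div_lt_iff₀ hsr]
      have := (div_lt_iff₀ hε).1 hsq
      linarith
    linarith [hev']
  refine squeeze_zero (g := fun c => 1 - (P {ω | M < ((R c ω : ℕ) : ℝ)}).toReal)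
    (fun c => ENNReal.toReal_nonneg) (fun c => ?_) ?_
  · calc (P {ω | ε < |(V c ω : ℝ) / (R c ω : ℝ) - CPL (R c ω) (V c ω) β|}).toReal
        ≤ (P ({ω | M < (R c ω : ℝ)}ᶜ)).toReal :=
          ENNReal.toReal_mono (measure_ne_top _ _) (measure_mono_ae (hsub c))
      _ = 1 - (P {ω | M < (R c ω : ℝ)}).toReal := by
          rw [prob_compl_eq_one_sub (hmeas c),
            ENNReal.toReal_sub_of_le prob_le_one ENNReal.one_ne_top, ENNReal.toReal_one]
  · have := (tendsto_const_nhds (x := (1:ℝ)) (f := atTop)).sub (hRinf M)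
    simpa using this
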